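/- Let T² = ℝ²/ℤ² and let a, b ∈ ℝ have irrational slope: q·a ≠ p·b for every (p,q) ∈ ℤ² ∖ {(0,0)}. Let λ : T² → [0,1] be continuous with λ⁻¹({0}) = {p₀} a single point, and let φ be a continuous flow on T² generated by the vector field (a,b)·λ, in the sense that φ admits a lift φ̂ to ℝ² such that t ↦ φ̂_t(z) is differentiable with derivative (a,b)·λ(proj(φ̂_t(z))) for every z ∈ ℝ². Then for every d ∈ ℤ² with d ≠ (0,0) there exists ε ∈ (0, 1/2) such that no ε-chain on T² starting and ending at p₀ has homology class [γ] = d. Equivalently, the set of α-relative asymptotic pseudo-directions D_{φ,α} ⊆ H₁(T², {p₀}; ℤ) ≅ ℤ² equals {0}, for α the class of the first coordinate. -/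

import Mathlib

set_option maxHeartbeats 1000000

abbrev Torus2 : Type := AddCircle (1:ℝ) × AddCircle (1:ℝ)

noncomputable def torusProj (z : ℝ × ℝ) : Torus2 :=
  ((z.1 : AddCircle (1:ℝ)), (z.2 : AddCircle (1:ℝ)))

private lemma round_min' (x : ℝ) (n : ℤ) : |x - round x| ≤ |x - n| := by
  rcases eq_or_ne n (round x) with h | h
  · rw [h]
  · have h0 : round x - n ≠ 0 := sub_ne_zero.mpr (Ne.symm h)
    have h1 : (1:ℝ) ≤ |(round x : ℝ) - (n:ℝ)| := by
      have := Int.one_le_abs h0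
      calc (1:ℝ) ≤ ((|round x - n| : ℤ) : ℝ) := by exact_mod_cast this
        _ = |(round x : ℝ) - (n:ℝ)| := by push_cast; ring_nf
    have h2 := abs_sub_round x
    have h3 : |(round x:ℝ) - n| ≤ |(round x:ℝ) - x| + |x - n| := abs_sub_le _ _ _
    have h4 : |(round x:ℝ) - x| = |x - round x| := abs_sub_comm _ _
    linarith

private lemma addCircle_dist' (α β : ℝ) :
    dist ((α : AddCircle (1:ℝ))) ((β : AddCircle (1:ℝ))) = |(α - β) - round (α - β)| := by
  rw [dist_eq_norm]
  have h : (α : AddCircle (1:ℝ)) - (β : AddCircle (1:ℝ)) = ((α - β : ℝ) : AddCircle (1:ℝ)) := by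
    norm_cast
  rw [h, AddCircle.norm_eq]; norm_num

private lemma torus_dist' (z w : ℝ × ℝ) :
    dist (torusProj z) (torusProj w) =
      max |(z.1 - w.1) - round (z.1 - w.1)| |(z.2 - w.2) - round (z.2 - w.2)| := by
  rw [show torusProj z = ((z.1 : AddCircle (1:ℝ)), (z.2 : AddCircle (1:ℝ))) from rfl,
    show torusProj w = ((w.1 : AddCircle (1:ℝ)), (w.2 : AddCircle (1:ℝ))) from rfl,
    Prod.dist_eq, addCircle_dist', addCircle_dist']

private lemma torus_dist_le' (z w : ℝ × ℝ) : dist (torusProj z) (torusProj w) ≤ ‖z - w‖ := by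
  rw [torus_dist', Prod.norm_def]
  have h1 : |(z.1 - w.1) - round (z.1 - w.1)| ≤ ‖(z - w).1‖ := by
    have := round_min' (z.1 - w.1) 0
    simpa [Real.norm_eq_abs] using this
  have h2 : |(z.2 - w.2) - round (z.2 - w.2)| ≤ ‖(z - w).2‖ := by
    have := round_min' (z.2 - w.2) 0
    simpa [Real.norm_eq_abs] using this
  exact max_le_max h1 h2

private lemma continuous_torusProj' : Continuous torusProj := by
  unfold torusProj
  exact (continuous_quotient_mk'.comp continuous_fst).prodMk
    (continuous_quotient_mk'.comp continuous_snd)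

private lemma tele_sum' (f : ℕ → ℝ) (p q : ℕ) (h : p ≤ q) :
    ∑ j ∈ Finset.Ico p q, (f (j+1) - f j) = f q - f p := by
  induction q, h using Nat.le_induction with
  | base => simp
  | succ q hq ih => rw [Finset.sum_Ico_succ_top hq, ih]; ring


private lemma dich_lemma (s₁ S s₂ R ν ε U H Fl : ℝ)
    (hs₁ : 0 < s₁) (hS : 0 < S) (hs₂ : 0 < s₂) (hs₂sq : s₂^2 = S)
    (hν0 : 0 < ν) (hε0 : 0 < ε) (hR0 : 0 < R)
    (hε1 : 100*s₁*ε ≤ S*ν) (hRs₂ : 100*s₁*R ≤ s₂) (hεs₂ : 100*s₁*ε ≤ s₂)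
    (hSνs₂ : 100*(S*ν) ≤ s₂)
    (hF : 0 ≤ Fl) (hnorm : S ≤ U^2 + H^2)
    (h1 : |H| ≤ s₁*((Fl+1)*ε + 4*R)) (h2 : S*Fl*ν - s₁*((Fl+1)*ε + 4*R) ≤ U) :
    4/5*s₂ ≤ U := by
  rcases le_or_gt (|H|) (3/5*s₂) with hcase | hcase
  · have hU1 : -(s₂/20) ≤ U := by
      have hsε : 0 ≤ s₁*ε := by positivity
      have hFν : 0 ≤ Fl * (S*ν - s₁*ε) := mul_nonneg hF (by linarith)
      nlinarith
    have hU2 : (16/25)*S ≤ U^2 := by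
      nlinarith [sq_abs H, abs_nonneg H, hs₂sq]
    by_contra hcon
    push_neg at hcon
    have hfac : 0 ≤ (4/5*s₂ - U) * (U + s₂/20) := mul_nonneg (by linarith) (by linarith)
    nlinarith [hs₂sq, hs₂]
  · have hstep1 : 1/2*s₂ < s₁*(Fl+1)*ε := by nlinarith [hRs₂, abs_nonneg H]
    have hstep2 : 49*s₂ ≤ Fl*(S*ν) := by
      have hm : (Fl+1)*(100*s₁*ε) ≤ (Fl+1)*(S*ν) := mul_le_mul_of_nonneg_left hε1 (by linarith)
      nlinarith
    have hm2 : Fl*(100*s₁*ε) ≤ Fl*(S*ν) := mul_le_mul_of_nonneg_left hε1 hF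
    nlinarith [hs₂, hεs₂, hRs₂]

private lemma norm_lemma (a b S : ℝ) (hSdef : S = a^2 + b^2) (k : ℤ × ℤ)
    (hk0 : k ≠ ((0:ℤ),(0:ℤ))) :
    S ≤ (a*(k.1:ℝ) + b*(k.2:ℝ))^2 + (b*(k.1:ℝ) - a*(k.2:ℝ))^2 := by
  have hk1 : (1:ℝ) ≤ (k.1:ℝ)^2 + (k.2:ℝ)^2 := by
    have hor : k.1 ≠ 0 ∨ k.2 ≠ 0 := by
      by_contra hcon
      push_neg at hcon
      exact hk0 (Prod.ext hcon.1 hcon.2)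
    rcases hor with h | h
    · have h1z : (1:ℤ) ≤ |k.1| := Int.one_le_abs h
      have h1' : (1:ℝ) ≤ |(k.1:ℝ)| := by exact_mod_cast h1z
      nlinarith [sq_abs ((k.1:ℝ)), sq_nonneg ((k.2:ℝ))]
    · have h2z : (1:ℤ) ≤ |k.2| := Int.one_le_abs h
      have h2' : (1:ℝ) ≤ |(k.2:ℝ)| := by exact_mod_cast h2z
      nlinarith [sq_abs ((k.2:ℝ)), sq_nonneg ((k.1:ℝ))]
  have hS0 : 0 ≤ S := by rw [hSdef]; positivity
  have hm := mul_nonneg hS0 (by linarith : (0:ℝ) ≤ (k.1:ℝ)^2 + (k.2:ℝ)^2 - 1)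
  nlinarith [hm]

private lemma Fb_lemma (s₁ S s₂ R ν ε AD U Fl : ℝ)
    (hs₁ : 0 < s₁) (hν0 : 0 < ν) (hS : 0 < S) (hs₂ : 0 < s₂)
    (hε0 : 0 < ε) (hR0 : 0 < R) (hAD : 0 ≤ AD)
    (hε1 : 100*s₁*ε ≤ S*ν) (hεs₂ : 100*s₁*ε ≤ s₂) (hRs₂ : 100*s₁*R ≤ s₂)
    (hF : 0 ≤ Fl) (h2 : S*Fl*ν - s₁*((Fl+1)*ε + 4*R) ≤ U) (hUle : U ≤ AD) :
    Fl*(S*ν) ≤ 2*(AD + s₂) := by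
  have hm2 : Fl*(100*s₁*ε) ≤ Fl*(S*ν) := mul_le_mul_of_nonneg_left hε1 hF
  nlinarith

private lemma hh_lemma (s₁ S s₂ R ν ε η AD H Fl : ℝ)
    (hs₁ : 0 < s₁) (hη : 0 < η) (hε0 : 0 < ε) (hAD : 0 ≤ AD) (hs₂ : 0 < s₂)
    (hε3 : 100*s₁*ε ≤ η) (hε4 : 8*s₁*ε*(AD + s₂) ≤ η*(S*ν)) (hRη : 100*s₁*R ≤ η)
    (hF : 0 ≤ Fl) (hFb : Fl*(S*ν) ≤ 2*(AD + s₂))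
    (h1 : |H| ≤ s₁*((Fl+1)*ε + 4*R)) :
    |H| < η := by
  have k1 : Fl*(8*s₁*ε*(AD+s₂)) ≤ Fl*(η*(S*ν)) := mul_le_mul_of_nonneg_left hε4 hF
  have k2 : η*(Fl*(S*ν)) ≤ η*(2*(AD+s₂)) := mul_le_mul_of_nonneg_left hFb hη.le
  have hDs₂ : 0 < AD + s₂ := by linarith
  have hFsε : Fl * (s₁*ε) ≤ η/4 := by nlinarith
  calc |H| ≤ s₁*((Fl + 1)*ε + 4*R) := h1
    _ = Fl * (s₁*ε) + s₁*ε + 4*(s₁*R) := by ring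
    _ ≤ η/4 + η/100 + 4*(η/100) := by linarith
    _ < η := by linarith

private lemma coord_lemma (S s₂ AD NR U H K1 K2 : ℝ)
    (hS : 0 < S) (hs₂ : 0 < s₂) (hs₂sq : s₂^2 = S) (hAD : 0 ≤ AD)
    (hU0 : 0 ≤ U) (hUle : U ≤ AD) (hH : |H| ≤ s₂)
    (hid : U^2 + H^2 = S*(K1^2 + K2^2))
    (hNB : AD/s₂ + 1 ≤ NR) :
    |K1| ≤ NR ∧ |K2| ≤ NR := by
  have hNd : AD + s₂ ≤ s₂ * NR := by
    have h := mul_le_mul_of_nonneg_left hNB hs₂.le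
    rw [mul_add, mul_div_cancel₀ _ (ne_of_gt hs₂)] at h
    linarith
  have hsum : S*(K1^2 + K2^2) ≤ AD^2 + S := by
    have hU2 : U^2 ≤ AD^2 := by nlinarith
    have hH2 : H^2 ≤ S := by nlinarith [sq_abs H, abs_nonneg H]
    linarith [hid.symm.le, hid.le]
  constructor
  · by_contra hcon
    push_neg at hcon
    have h1 : s₂*NR < s₂*|K1| := by
      exact mul_lt_mul_of_pos_left hcon hs₂
    have h2 : (AD + s₂)^2 < (s₂*|K1|)^2 := by nlinarith [hAD, hs₂, abs_nonneg K1]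
    have h3 : (s₂*|K1|)^2 = S*K1^2 := by rw [mul_pow, hs₂sq, sq_abs]
    nlinarith [mul_nonneg hS.le (sq_nonneg K2), hAD, hs₂]
  · by_contra hcon
    push_neg at hcon
    have h1 : s₂*NR < s₂*|K2| := by
      exact mul_lt_mul_of_pos_left hcon hs₂
    have h2 : (AD + s₂)^2 < (s₂*|K2|)^2 := by nlinarith [hAD, hs₂, abs_nonneg K2]
    have h3 : (s₂*|K2|)^2 = S*K2^2 := by rw [mul_pow, hs₂sq, sq_abs]
    nlinarith [mul_nonneg hS.le (sq_nonneg K1), hAD, hs₂]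

/-- **Slowed irrational flows have no nontrivial relative asymptotic pseudo-directions.**
Let `(a,b)` have irrational slope, let `λ : T² → [0,1]` be continuous and vanish exactly
at `p₀`, and let `φ` be a continuous flow on `T²` generated by the vector field `(a,b)·λ`
(via a lifted flow `φ̂` on `ℝ²`). Then for every nonzero `d ∈ ℤ²` there is
`ε ∈ (0, 1/2)` such that no `ε`-chain from `p₀` to itself has homology class `d`
(the homology class being computed by lifting the chain to `ℝ²`). -/
theorem no_nonzero_relative_direction
    (a b : ℝ)
    (hirr : ∀ p q : ℤ, (p, q) ≠ ((0 : ℤ), (0 : ℤ)) → (q : ℝ) * a ≠ (p : ℝ) * b)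
    (lam : Torus2 → ℝ) (hlamc : Continuous lam)
    (hlam01 : ∀ z : Torus2, lam z ∈ Set.Icc (0:ℝ) 1)
    (p₀ : Torus2) (hlam0 : lam ⁻¹' {0} = {p₀})
    (φ : ℝ → Torus2 → Torus2)
    (hφc : Continuous fun p : ℝ × Torus2 => φ p.1 p.2)
    (hφ0 : ∀ x : Torus2, φ 0 x = x)
    (hφadd : ∀ (s t : ℝ) (x : Torus2), φ (s + t) x = φ s (φ t x))
    (φh : ℝ → ℝ × ℝ → ℝ × ℝ)
    (hφhc : Continuous fun p : ℝ × (ℝ × ℝ) => φh p.1 p.2)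
    (hφh0 : ∀ z : ℝ × ℝ, φh 0 z = z)
    (hφhadd : ∀ (s t : ℝ) (z : ℝ × ℝ), φh (s + t) z = φh s (φh t z))
    (hproj : ∀ (t : ℝ) (z : ℝ × ℝ), torusProj (φh t z) = φ t (torusProj z))
    (hderiv : ∀ (z : ℝ × ℝ) (t : ℝ),
      HasDerivAt (fun s : ℝ => φh s z) (lam (torusProj (φh t z)) • (a, b)) t) :
    ∀ d : ℤ × ℤ, d ≠ ((0 : ℤ), (0 : ℤ)) → ∃ ε : ℝ, 0 < ε ∧ ε < 1/2 ∧
      ¬ ∃ (n : ℕ) (x : ℕ → Torus2) (xh : ℕ → ℝ × ℝ) (τ : ℕ → ℝ),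
          1 ≤ n ∧ x 0 = p₀ ∧ x n = p₀ ∧
          (∀ i < n, 1 ≤ τ i) ∧
          (∀ i < n, dist (φ (τ i) (x i)) (x (i + 1)) < ε) ∧
          (∀ i ≤ n, torusProj (xh i) = x i) ∧
          (∀ i < n, ‖xh (i + 1) - φh (τ i) (xh i)‖ < ε) ∧
          xh n - xh 0 = (((d.1 : ℝ), (d.2 : ℝ)) : ℝ × ℝ) := by
  classical
  have ha : a ≠ 0 := by
    have := hirr 0 1 (by decide)
    simpa using this
  have hb : b ≠ 0 := by
    have h := hirr 1 0 (by decide)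
    simp at h
    exact fun hb0 => h (hb0.symm)
  -- the flow displacement formula
  have flow : ∀ (z : ℝ × ℝ) (t : ℝ),
      φh t z = z + (∫ s in (0:ℝ)..t, lam (torusProj (φh s z))) • ((a,b) : ℝ × ℝ) := by
    intro z t
    have hLc : Continuous (fun s => lam (torusProj (φh s z))) :=
      hlamc.comp (continuous_torusProj'.comp (hφhc.comp (continuous_id.prodMk continuous_const)))
    have hI : ∀ u : ℝ, HasDerivAt (fun w => ∫ s in (0:ℝ)..w, lam (torusProj (φh s z)))
        (lam (torusProj (φh u z))) u := fun u =>
      intervalIntegral.integral_hasDerivAt_right (hLc.intervalIntegrable _ _)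
        (hLc.stronglyMeasurableAtFilter _ _) hLc.continuousAt
    have h1 : ∀ u : ℝ, HasDerivAt
        (fun w => (φh w z).1 - (∫ s in (0:ℝ)..w, lam (torusProj (φh s z))) * a) 0 u := by
      intro u
      have hfst : HasDerivAt (fun s : ℝ => (φh s z).1) (lam (torusProj (φh u z)) * a) u :=
        (hderiv z u).fst
      have hd := hfst.sub ((hI u).mul_const a)
      rw [sub_self] at hd
      exact hd
    have h2 : ∀ u : ℝ, HasDerivAt
        (fun w => (φh w z).2 - (∫ s in (0:ℝ)..w, lam (torusProj (φh s z))) * b) 0 u := by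
      intro u
      have hsnd : HasDerivAt (fun s : ℝ => (φh s z).2) (lam (torusProj (φh u z)) * b) u :=
        (hderiv z u).snd
      have hd := hsnd.sub ((hI u).mul_const b)
      rw [sub_self] at hd
      exact hd
    have hc1 := is_const_of_deriv_eq_zero (fun u => (h1 u).differentiableAt)
      (fun u => (h1 u).deriv) t 0
    have hc2 := is_const_of_deriv_eq_zero (fun u => (h2 u).differentiableAt)
      (fun u => (h2 u).deriv) t 0
    simp only [intervalIntegral.integral_same, hφh0, mul_zero, zero_mul, sub_zero] at hc1 hc2
    have e1 : (φh t z).1 = z.1 + (∫ s in (0:ℝ)..t, lam (torusProj (φh s z))) * a := by linarith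
    have e2 : (φh t z).2 = z.2 + (∫ s in (0:ℝ)..t, lam (torusProj (φh s z))) * b := by linarith
    have hpair : φh t z = ((φh t z).1, (φh t z).2) := rfl
    rw [hpair, e1, e2]
    simp only [Prod.ext_iff, Prod.fst_add, Prod.snd_add, Prod.smul_fst, Prod.smul_snd,
      smul_eq_mul]
    constructor <;> trivial
  -- constants depending only on a, b, d
  set s₁ : ℝ := |a| + |b| with hs₁def
  have hs₁ : 0 < s₁ := add_pos_of_pos_of_nonneg (abs_pos.mpr ha) (abs_nonneg b)
  set S : ℝ := a^2 + b^2 with hSdef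
  have hS : 0 < S := by positivity
  set s₂ : ℝ := Real.sqrt S with hs₂def
  have hs₂ : 0 < s₂ := Real.sqrt_pos.mpr hS
  have hs₂sq : s₂^2 = S := Real.sq_sqrt hS.le
  have hbs₂ : |b| ≤ s₂ := by
    nlinarith [abs_nonneg b, sq_abs b, sq_nonneg a]
  intro d hd
  set D : ℝ := a * (d.1:ℝ) + b * (d.2:ℝ) with hDdef
  set N : ℤ := ⌈|D|/s₂⌉ + 1 with hNdef
  have hN1 : 1 ≤ N := by
    have : (0:ℤ) ≤ ⌈|D|/s₂⌉ := Int.ceil_nonneg (by positivity)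
    omega
  have hNB : |D|/s₂ + 1 ≤ (N:ℝ) := by
    have := Int.le_ceil (|D|/s₂)
    push_cast [hNdef]
    linarith
  set Λ : Finset (ℤ×ℤ) := ((Finset.Icc (-N) N) ×ˢ (Finset.Icc (-N) N)).erase ((0:ℤ),(0:ℤ))
    with hΛdef
  have hΛne : Λ.Nonempty := by
    refine ⟨((1:ℤ),(0:ℤ)), ?_⟩
    rw [hΛdef, Finset.mem_erase]
    constructor
    · simp
    · rw [Finset.mem_product]
      constructor <;> (rw [Finset.mem_Icc]; omega)
  set η : ℝ := Λ.inf' hΛne (fun k => |b * (k.1:ℝ) - a * (k.2:ℝ)|) with hηdef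
  have hηle : ∀ k ∈ Λ, η ≤ |b * (k.1:ℝ) - a * (k.2:ℝ)| := fun k hk => Finset.inf'_le _ hk
  have hηpos : 0 < η := by
    obtain ⟨k, hk, hke⟩ := Finset.exists_mem_eq_inf' hΛne (fun k => |b * (k.1:ℝ) - a * (k.2:ℝ)|)
    rw [hηdef, hke]
    have hk0 : k ≠ ((0:ℤ),(0:ℤ)) := (Finset.mem_erase.mp hk).1
    have hir := hirr k.1 k.2 (by
      intro h
      apply hk0
      exact Prod.ext (congrArg Prod.fst h) (congrArg Prod.snd h))
    have hne : b * (k.1:ℝ) - a * (k.2:ℝ) ≠ 0 := by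
      intro h0
      exact hir (by linarith [sub_eq_zero.mp h0])
    exact abs_pos.mpr hne
  have hηb : η ≤ |b| := by
    have := hηle ((1:ℤ),(0:ℤ)) (by
      rw [hΛdef, Finset.mem_erase]
      refine ⟨by simp, ?_⟩
      rw [Finset.mem_product]
      constructor <;> (rw [Finset.mem_Icc]; omega))
    simpa using this
  have hηs₂ : η ≤ s₂ := hηb.trans hbs₂
  -- choice of R
  set R : ℝ := min (1/100) (η/(100*s₁)) with hRdef
  have hR0 : 0 < R := lt_min (by norm_num) (by positivity)
  have hR1 : R ≤ 1/100 := min_le_left _ _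
  have hRη : 100 * s₁ * R ≤ η := by
    have h : R ≤ η/(100*s₁) := min_le_right _ _
    have := (le_div_iff₀ (by positivity : (0:ℝ) < 100*s₁)).mp h
    linarith
  have hRs₂ : 100 * s₁ * R ≤ s₂ := hRη.trans hηs₂
  -- the minimum of lam away from p₀
  have hμ : ∃ μ₀ : ℝ, 0 < μ₀ ∧ μ₀ ≤ 1 ∧ ∀ y : Torus2, R ≤ dist y p₀ → μ₀ ≤ lam y := by
    set K : Set Torus2 := {y | R ≤ dist y p₀} with hKdef
    have hKcl : IsClosed K := isClosed_le continuous_const (continuous_id.dist continuous_const)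
    have hKc : IsCompact K := hKcl.isCompact
    have hKne : K.Nonempty := by
      refine ⟨p₀ + torusProj ((1:ℝ)/2, (1:ℝ)/2), ?_⟩
      show R ≤ dist _ p₀
      rw [dist_self_add_left]
      have hnv : ‖torusProj ((1:ℝ)/2, (1:ℝ)/2)‖ = 1/2 := by
        rw [show torusProj ((1:ℝ)/2, (1:ℝ)/2)
            = ((((1:ℝ)/2 : ℝ) : AddCircle (1:ℝ)), (((1:ℝ)/2 : ℝ) : AddCircle (1:ℝ))) from rfl,
          Prod.norm_def]
        rw [AddCircle.norm_eq]
        norm_num [round_eq]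
      rw [hnv]
      linarith
    obtain ⟨y₀, hy₀K, hy₀min'⟩ := hKc.exists_isMinOn hKne hlamc.continuousOn
    have hy₀min : ∀ y ∈ K, lam y₀ ≤ lam y := fun y hy => hy₀min' hy
    refine ⟨lam y₀, ?_, (hlam01 y₀).2, fun y hy => hy₀min y hy⟩
    have hy₀ne : y₀ ≠ p₀ := by
      intro h
      have := hy₀K
      rw [hKdef, Set.mem_setOf_eq, h, dist_self] at this
      linarith
    have h0 : lam y₀ ≠ 0 := by
      intro h
      have : y₀ ∈ lam ⁻¹' {0} := by simp [h]
      rw [hlam0] at this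
      exact hy₀ne this
    exact lt_of_le_of_ne (hlam01 y₀).1 (Ne.symm h0)
  obtain ⟨μ₀, hμ₀, hμ₀1, hmin⟩ := hμ
  set sI : ℝ := ‖((a,b) : ℝ×ℝ)‖ with hsIdef
  have hsI : 0 < sI := by
    rw [hsIdef]
    have : ((a,b) : ℝ×ℝ) ≠ 0 := by
      intro h
      exact ha (congrArg Prod.fst h)
    exact norm_pos_iff.mpr this
  have hSsI : S ≤ s₁ * sI := by
    rw [hsIdef, Prod.norm_def]
    have h1 : |a| ≤ max ‖a‖ ‖b‖ := le_max_of_le_left (le_of_eq (Real.norm_eq_abs a).symm)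
    have h2 : |b| ≤ max ‖a‖ ‖b‖ := le_max_of_le_right (le_of_eq (Real.norm_eq_abs b).symm)
    have ha2 : a^2 ≤ |a| * max ‖a‖ ‖b‖ := by
      nlinarith [sq_abs a, abs_nonneg a]
    have hb2 : b^2 ≤ |b| * max ‖a‖ ‖b‖ := by
      nlinarith [sq_abs b, abs_nonneg b]
    rw [hSdef, hs₁def]
    nlinarith [abs_nonneg a, abs_nonneg b]
  set ν : ℝ := min (R/sI) μ₀ with hνdef
  have hν0 : 0 < ν := lt_min (by positivity) hμ₀
  have hνμ : ν ≤ μ₀ := min_le_right _ _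
  have hνsI : ν * sI ≤ R := by
    have h : ν ≤ R/sI := min_le_left _ _
    have := (le_div_iff₀ hsI).mp h
    linarith
  have hSν : S * ν ≤ s₁ * R := by
    calc S * ν ≤ (s₁ * sI) * ν := mul_le_mul_of_nonneg_right hSsI hν0.le
      _ = s₁ * (ν * sI) := by ring
      _ ≤ s₁ * R := mul_le_mul_of_nonneg_left hνsI hs₁.le
  have hSνs₂ : 100 * (S * ν) ≤ s₂ := by nlinarith
  -- choice of ε
  set ε : ℝ := min (1/4) (min ((S*ν)/(100*s₁)) (min (η/(100*s₁))
    ((η*(S*ν))/(8*s₁*(|D| + s₂))))) with hεdef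
  have hDs₂ : 0 < |D| + s₂ := by positivity
  have hε0 : 0 < ε := by
    apply lt_min (by norm_num)
    apply lt_min (by positivity)
    apply lt_min (by positivity) (by positivity)
  have hε14 : ε ≤ 1/4 := min_le_left _ _
  have hε1 : 100 * s₁ * ε ≤ S * ν := by
    have h : ε ≤ (S*ν)/(100*s₁) := le_trans (min_le_right _ _) (min_le_left _ _)
    have := (le_div_iff₀ (by positivity : (0:ℝ) < 100*s₁)).mp h
    linarith
  have hε3 : 100 * s₁ * ε ≤ η := by
    have h : ε ≤ η/(100*s₁) :=
      le_trans (min_le_right _ _) (le_trans (min_le_right _ _) (min_le_left _ _))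
    have := (le_div_iff₀ (by positivity : (0:ℝ) < 100*s₁)).mp h
    linarith
  have hε4 : 8 * s₁ * ε * (|D| + s₂) ≤ η * (S*ν) := by
    have h : ε ≤ (η*(S*ν))/(8*s₁*(|D| + s₂)) :=
      le_trans (min_le_right _ _) (le_trans (min_le_right _ _) (min_le_right _ _))
    have := (le_div_iff₀ (by positivity : (0:ℝ) < 8*s₁*(|D| + s₂))).mp h
    nlinarith
  have hεs₂ : 100 * s₁ * ε ≤ s₂ := hε3.trans hηs₂
  refine ⟨ε, hε0, by linarith, ?_⟩
  rintro ⟨n, x, xh, τ, hn, hx0, hxn, hτ, -, hlift, hjump, hhom⟩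
  -- chain setup
  set P : ℝ × ℝ := xh 0 with hPdef
  have hP : torusProj P = p₀ := by rw [hPdef, hlift 0 (Nat.zero_le n), hx0]
  set cj : ℕ → ℝ := fun j => ∫ s in (0:ℝ)..(τ j), lam (torusProj (φh s (xh j))) with hcjdef
  set v : ℕ → ℝ × ℝ := fun j => xh (j+1) - φh (τ j) (xh j) with hvdef
  set kz : ℕ → ℤ × ℤ := fun j => (round ((xh j - P).1), round ((xh j - P).2)) with hkzdef
  set e1 : ℕ → ℝ := fun j => (xh j - P).1 - ((kz j).1 : ℝ) with he1def
  set e2 : ℕ → ℝ := fun j => (xh j - P).2 - ((kz j).2 : ℝ) with he2def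
  set Home : ℕ → Prop := fun j => dist (x j) p₀ < 2*R with hHomedef
  set hzk : ℤ × ℤ → ℝ := fun k => b*(k.1:ℝ) - a*(k.2:ℝ) with hhzkdef
  set Uzk : ℤ × ℤ → ℝ := fun k => a*(k.1:ℝ) + b*(k.2:ℝ) with hUzkdef
  have hH0 : Home 0 := by
    show dist (x 0) p₀ < 2*R
    rw [hx0, dist_self]; linarith
  have hHn : Home n := by
    show dist (x n) p₀ < 2*R
    rw [hxn, dist_self]; linarith
  have hstep : ∀ j, xh (j+1) = xh j + (cj j) • ((a,b):ℝ×ℝ) + v j := by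
    intro j
    have h := flow (xh j) (τ j)
    have hv : v j = xh (j+1) - φh (τ j) (xh j) := by rw [hvdef]
    rw [hv, h]
    simp only [hcjdef]
    abel
  have hvε : ∀ j < n, ‖v j‖ ≤ ε := by
    intro j hj
    have := hjump j hj
    rw [hvdef]
    exact this.le
  have hv1 : ∀ j < n, |(v j).1| ≤ ε ∧ |(v j).2| ≤ ε := by
    intro j hj
    have h := hvε j hj
    rw [Prod.norm_def] at h
    constructor
    · have h1 : ‖(v j).1‖ ≤ ε := le_trans (le_max_left _ _) h
      rwa [Real.norm_eq_abs] at h1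
    · have h2 : ‖(v j).2‖ ≤ ε := le_trans (le_max_right _ _) h
      rwa [Real.norm_eq_abs] at h2
  have hcj0 : ∀ j < n, 0 ≤ cj j := by
    intro j hj
    simp only [hcjdef]
    exact intervalIntegral.integral_nonneg (by linarith [hτ j hj]) (fun u _ => (hlam01 _).1)
  have hcjν : ∀ j < n, ¬ Home j → ν ≤ cj j := by
    intro j hj hHj
    have hfar : 2*R ≤ dist (torusProj (xh j)) p₀ := by
      rw [hlift j hj.le]
      exact not_lt.mp hHj
    simp only [hcjdef]
    set L : ℝ → ℝ := fun s => lam (torusProj (φh s (xh j))) with hLdef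
    have hLc : Continuous L :=
      hlamc.comp (continuous_torusProj'.comp (hφhc.comp (continuous_id.prodMk continuous_const)))
    have hL0 : ∀ s, 0 ≤ L s := fun s => (hlam01 _).1
    have ht := hτ j hj
    by_contra hcon
    push_neg at hcon
    have hpart : ∀ s ∈ Set.Icc (0:ℝ) (τ j), (∫ u in (0:ℝ)..s, L u) ≤ ∫ u in (0:ℝ)..(τ j), L u := by
      intro s hs
      have h1 : (∫ u in (0:ℝ)..(τ j), L u) - (∫ u in (0:ℝ)..s, L u) = ∫ u in s..(τ j), L u :=
        intervalIntegral.integral_interval_sub_left (hLc.intervalIntegrable _ _)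
          (hLc.intervalIntegrable _ _)
      have h2 : 0 ≤ ∫ u in s..(τ j), L u :=
        intervalIntegral.integral_nonneg hs.2 (fun u _ => hL0 u)
      linarith
    have hpartnn : ∀ s ∈ Set.Icc (0:ℝ) (τ j), 0 ≤ ∫ u in (0:ℝ)..s, L u := fun s hs =>
      intervalIntegral.integral_nonneg hs.1 (fun u _ => hL0 u)
    have horb : ∀ s ∈ Set.Icc (0:ℝ) (τ j), μ₀ ≤ L s := by
      intro s hs
      apply hmin
      have hd1 : dist (torusProj (φh s (xh j))) (torusProj (xh j)) ≤ ‖φh s (xh j) - xh j‖ :=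
        torus_dist_le' _ _
      have hfs : φh s (xh j) - xh j = (∫ u in (0:ℝ)..s, L u) • ((a,b) : ℝ×ℝ) := by
        rw [flow (xh j) s]; abel
      rw [hfs, norm_smul] at hd1
      have hbnd : ‖(∫ u in (0:ℝ)..s, L u)‖ * ‖((a,b):ℝ×ℝ)‖ ≤ R := by
        have h1 : ‖(∫ u in (0:ℝ)..s, L u)‖ = ∫ u in (0:ℝ)..s, L u :=
          Real.norm_of_nonneg (hpartnn s hs)
        have h2 : (∫ u in (0:ℝ)..s, L u) < ν := lt_of_le_of_lt (hpart s hs) hcon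
        rw [h1]
        calc (∫ u in (0:ℝ)..s, L u) * ‖((a,b):ℝ×ℝ)‖ ≤ ν * ‖((a,b):ℝ×ℝ)‖ :=
              mul_le_mul_of_nonneg_right h2.le (norm_nonneg _)
          _ = ν * sI := by rw [hsIdef]
          _ ≤ R := hνsI
      have htri := dist_triangle (torusProj (xh j)) (torusProj (φh s (xh j))) p₀
      have hcm : dist (torusProj (xh j)) (torusProj (φh s (xh j)))
          = dist (torusProj (φh s (xh j))) (torusProj (xh j)) := dist_comm _ _
      linarith
    have hlow : (τ j) * μ₀ ≤ ∫ u in (0:ℝ)..(τ j), L u := by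
      have := intervalIntegral.integral_mono_on (by linarith : (0:ℝ) ≤ τ j)
        (intervalIntegrable_const : IntervalIntegrable (fun _ => μ₀) MeasureTheory.volume 0 (τ j))
        (hLc.intervalIntegrable _ _) horb
      simpa using this
    nlinarith
  have hdist : ∀ j, j ≤ n → dist (x j) p₀ = max |e1 j| |e2 j| := by
    intro j hj
    rw [← hlift j hj, ← hP, torus_dist']
    simp only [he1def, he2def, hkzdef, Prod.fst_sub, Prod.snd_sub]
  have he : ∀ j, j ≤ n → Home j → |e1 j| ≤ 2*R ∧ |e2 j| ≤ 2*R := by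
    intro j hj hH
    have hd := hdist j hj
    have hlt : max |e1 j| |e2 j| < 2*R := by rw [← hd]; exact hH
    exact ⟨(lt_of_le_of_lt (le_max_left _ _) hlt).le, (lt_of_le_of_lt (le_max_right _ _) hlt).le⟩
  have hzstep : ∀ j, b*(xh (j+1)).1 - a*(xh (j+1)).2
      = (b*(xh j).1 - a*(xh j).2) + (b*(v j).1 - a*(v j).2) := by
    intro j
    rw [hstep j]
    simp only [Prod.fst_add, Prod.snd_add, Prod.smul_fst, Prod.smul_snd, smul_eq_mul]
    ring
  have hUstep : ∀ j, a*(xh (j+1)).1 + b*(xh (j+1)).2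
      = (a*(xh j).1 + b*(xh j).2) + cj j * S + (a*(v j).1 + b*(v j).2) := by
    intro j
    rw [hstep j]
    simp only [Prod.fst_add, Prod.snd_add, Prod.smul_fst, Prod.smul_snd, smul_eq_mul, hSdef]
    ring
  clear_value s₁ S s₂ D N Λ η R sI ν ε P cj v kz e1 e2 Home hzk Uzk
  -- the key segment estimate
  have seg : ∀ p q : ℕ, p < q → q ≤ n → Home p → Home q →
      (∀ j, p < j → j < q → ¬ Home j) →
      |hzk (kz q - kz p)| ≤ s₁*(((q-p:ℕ):ℝ)*ε + 4*R) ∧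
      S*(((q-p-1:ℕ):ℝ))*ν - s₁*(((q-p:ℕ):ℝ)*ε + 4*R) ≤ Uzk (kz q - kz p) := by
    intro p q hpq hqn hHp hHq hmid
    have hjn : ∀ j ∈ Finset.Ico p q, j < n := fun j hj =>
      lt_of_lt_of_le (Finset.mem_Ico.mp hj).2 hqn
    have t1 : (b*(xh q).1 - a*(xh q).2) - (b*(xh p).1 - a*(xh p).2)
        = ∑ j ∈ Finset.Ico p q, (b*(v j).1 - a*(v j).2) := by
      have ht := tele_sum' (fun j => b*(xh j).1 - a*(xh j).2) p q hpq.le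
      rw [← ht]
      refine Finset.sum_congr rfl (fun j hj => ?_)
      show b*(xh (j+1)).1 - a*(xh (j+1)).2 - (b*(xh j).1 - a*(xh j).2) = b*(v j).1 - a*(v j).2
      rw [hzstep j]; ring
    have t1b : |(b*(xh q).1 - a*(xh q).2) - (b*(xh p).1 - a*(xh p).2)|
        ≤ ((q-p:ℕ):ℝ) * (s₁ * ε) := by
      rw [t1]
      refine le_trans (Finset.abs_sum_le_sum_abs _ _) ?_
      have hbnd : ∀ j ∈ Finset.Ico p q, |b*(v j).1 - a*(v j).2| ≤ s₁ * ε := by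
        intro j hj
        obtain ⟨h1, h2⟩ := hv1 j (hjn j hj)
        calc |b*(v j).1 - a*(v j).2| ≤ |b*(v j).1| + |a*(v j).2| := abs_sub _ _
          _ = |b| * |(v j).1| + |a| * |(v j).2| := by rw [abs_mul, abs_mul]
          _ ≤ |b| * ε + |a| * ε := add_le_add (mul_le_mul_of_nonneg_left h1 (abs_nonneg b))
              (mul_le_mul_of_nonneg_left h2 (abs_nonneg a))
          _ = s₁ * ε := by rw [hs₁def]; ring
      calc ∑ j ∈ Finset.Ico p q, |b*(v j).1 - a*(v j).2|
          ≤ (Finset.Ico p q).card • (s₁*ε) := Finset.sum_le_card_nsmul _ _ _ hbnd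
        _ = ((q-p:ℕ):ℝ) * (s₁*ε) := by rw [Nat.card_Ico, nsmul_eq_mul]
    have t2 : (a*(xh q).1 + b*(xh q).2) - (a*(xh p).1 + b*(xh p).2)
        = ∑ j ∈ Finset.Ico p q, (cj j * S + (a*(v j).1 + b*(v j).2)) := by
      have ht := tele_sum' (fun j => a*(xh j).1 + b*(xh j).2) p q hpq.le
      rw [← ht]
      refine Finset.sum_congr rfl (fun j hj => ?_)
      show a*(xh (j+1)).1 + b*(xh (j+1)).2 - (a*(xh j).1 + b*(xh j).2)
        = cj j * S + (a*(v j).1 + b*(v j).2)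
      rw [hUstep j]; ring
    have hsumc : ((q-p-1:ℕ):ℝ) * (ν * S) ≤ ∑ j ∈ Finset.Ico p q, cj j * S := by
      have hsub : Finset.Ico (p+1) q ⊆ Finset.Ico p q := Finset.Ico_subset_Ico (by omega) le_rfl
      have h1 : ∑ j ∈ Finset.Ico (p+1) q, cj j * S ≤ ∑ j ∈ Finset.Ico p q, cj j * S :=
        Finset.sum_le_sum_of_subset_of_nonneg hsub
          (fun j hj _ => mul_nonneg (hcj0 j (hjn j hj)) hS.le)
      have h2 : (Finset.Ico (p+1) q).card • (ν * S) ≤ ∑ j ∈ Finset.Ico (p+1) q, cj j * S := by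
        apply Finset.card_nsmul_le_sum
        intro j hj
        have hjm := Finset.mem_Ico.mp hj
        have hνcj := hcjν j (hjn j (hsub hj)) (hmid j (by omega) hjm.2)
        exact mul_le_mul_of_nonneg_right hνcj hS.le
      rw [Nat.card_Ico, nsmul_eq_mul] at h2
      have hcc : q - (p+1) = q - p - 1 := by omega
      rw [hcc] at h2
      linarith
    have hsumv : -(((q-p:ℕ):ℝ) * (s₁*ε)) ≤ ∑ j ∈ Finset.Ico p q, (a*(v j).1 + b*(v j).2) := by
      have hbnd : ∀ j ∈ Finset.Ico p q, -(s₁*ε) ≤ a*(v j).1 + b*(v j).2 := by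
        intro j hj
        obtain ⟨h1, h2⟩ := hv1 j (hjn j hj)
        have habs : |a*(v j).1 + b*(v j).2| ≤ s₁ * ε := by
          calc |a*(v j).1 + b*(v j).2| ≤ |a*(v j).1| + |b*(v j).2| := abs_add_le _ _
            _ = |a| * |(v j).1| + |b| * |(v j).2| := by rw [abs_mul, abs_mul]
            _ ≤ |a| * ε + |b| * ε := add_le_add (mul_le_mul_of_nonneg_left h1 (abs_nonneg a))
                (mul_le_mul_of_nonneg_left h2 (abs_nonneg b))
            _ = s₁ * ε := by rw [hs₁def]; ring
        linarith [neg_abs_le (a*(v j).1 + b*(v j).2)]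
      have h2 := Finset.card_nsmul_le_sum (Finset.Ico p q) _ _ hbnd
      rw [Nat.card_Ico, nsmul_eq_mul] at h2
      calc -(((q-p:ℕ):ℝ) * (s₁*ε)) = ((q-p:ℕ):ℝ) * (-(s₁*ε)) := by ring
        _ ≤ _ := h2
    have t2b : S*((q-p-1:ℕ):ℝ)*ν - ((q-p:ℕ):ℝ)*(s₁*ε)
        ≤ (a*(xh q).1 + b*(xh q).2) - (a*(xh p).1 + b*(xh p).2) := by
      rw [t2, Finset.sum_add_distrib]
      have := add_le_add hsumc hsumv
      calc S*((q-p-1:ℕ):ℝ)*ν - ((q-p:ℕ):ℝ)*(s₁*ε)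
          = ((q-p-1:ℕ):ℝ) * (ν * S) + -(((q-p:ℕ):ℝ) * (s₁*ε)) := by ring
        _ ≤ _ := this
    -- pass to lattice differences
    obtain ⟨hep1, hep2⟩ := he p (le_trans hpq.le hqn) hHp
    obtain ⟨heq1, heq2⟩ := he q hqn hHq
    have hcast1 : hzk (kz q - kz p)
        = ((b*(xh q).1 - a*(xh q).2) - (b*(xh p).1 - a*(xh p).2))
          - (b*(e1 q) - a*(e2 q)) + (b*(e1 p) - a*(e2 p)) := by
      simp only [hhzkdef, he1def, he2def, Prod.fst_sub, Prod.snd_sub, Int.cast_sub]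
      push_cast
      ring
    have hcast2 : Uzk (kz q - kz p)
        = ((a*(xh q).1 + b*(xh q).2) - (a*(xh p).1 + b*(xh p).2))
          - (a*(e1 q) + b*(e2 q)) + (a*(e1 p) + b*(e2 p)) := by
      simp only [hUzkdef, he1def, he2def, Prod.fst_sub, Prod.snd_sub, Int.cast_sub]
      push_cast
      ring
    have heb1 : |b*(e1 q) - a*(e2 q)| ≤ s₁ * (2*R) := by
      calc |b*(e1 q) - a*(e2 q)| ≤ |b*(e1 q)| + |a*(e2 q)| := abs_sub _ _
        _ = |b| * |e1 q| + |a| * |e2 q| := by rw [abs_mul, abs_mul]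
        _ ≤ |b| * (2*R) + |a| * (2*R) := add_le_add (mul_le_mul_of_nonneg_left heq1 (abs_nonneg b))
            (mul_le_mul_of_nonneg_left heq2 (abs_nonneg a))
        _ = s₁ * (2*R) := by rw [hs₁def]; ring
    have heb2 : |b*(e1 p) - a*(e2 p)| ≤ s₁ * (2*R) := by
      calc |b*(e1 p) - a*(e2 p)| ≤ |b*(e1 p)| + |a*(e2 p)| := abs_sub _ _
        _ = |b| * |e1 p| + |a| * |e2 p| := by rw [abs_mul, abs_mul]
        _ ≤ |b| * (2*R) + |a| * (2*R) := add_le_add (mul_le_mul_of_nonneg_left hep1 (abs_nonneg b))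
            (mul_le_mul_of_nonneg_left hep2 (abs_nonneg a))
        _ = s₁ * (2*R) := by rw [hs₁def]; ring
    have heb3 : |a*(e1 q) + b*(e2 q)| ≤ s₁ * (2*R) := by
      calc |a*(e1 q) + b*(e2 q)| ≤ |a*(e1 q)| + |b*(e2 q)| := abs_add_le _ _
        _ = |a| * |e1 q| + |b| * |e2 q| := by rw [abs_mul, abs_mul]
        _ ≤ |a| * (2*R) + |b| * (2*R) := add_le_add (mul_le_mul_of_nonneg_left heq1 (abs_nonneg a))
            (mul_le_mul_of_nonneg_left heq2 (abs_nonneg b))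
        _ = s₁ * (2*R) := by rw [hs₁def]; ring
    have heb4 : |a*(e1 p) + b*(e2 p)| ≤ s₁ * (2*R) := by
      calc |a*(e1 p) + b*(e2 p)| ≤ |a*(e1 p)| + |b*(e2 p)| := abs_add_le _ _
        _ = |a| * |e1 p| + |b| * |e2 p| := by rw [abs_mul, abs_mul]
        _ ≤ |a| * (2*R) + |b| * (2*R) := add_le_add (mul_le_mul_of_nonneg_left hep1 (abs_nonneg a))
            (mul_le_mul_of_nonneg_left hep2 (abs_nonneg b))
        _ = s₁ * (2*R) := by rw [hs₁def]; ring
    constructor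
    · rw [hcast1]
      have h1 := abs_add_le ((b*(xh q).1 - a*(xh q).2) - (b*(xh p).1 - a*(xh p).2)
          - (b*(e1 q) - a*(e2 q))) (b*(e1 p) - a*(e2 p))
      have h2 := abs_sub ((b*(xh q).1 - a*(xh q).2) - (b*(xh p).1 - a*(xh p).2))
          (b*(e1 q) - a*(e2 q))
      have hrhs : s₁*(((q-p:ℕ):ℝ)*ε + 4*R)
          = ((q-p:ℕ):ℝ)*(s₁*ε) + s₁*(2*R) + s₁*(2*R) := by ring
      linarith [h1, h2, t1b, heb1, heb2]
    · rw [hcast2]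
      have h3 := le_abs_self (a*(e1 q) + b*(e2 q))
      have h4 := neg_abs_le (a*(e1 p) + b*(e2 p))
      have hrhs : s₁*(((q-p:ℕ):ℝ)*ε + 4*R)
          = ((q-p:ℕ):ℝ)*(s₁*ε) + s₁*(2*R) + s₁*(2*R) := by ring
      linarith [t2b, heb3, heb4]
  -- inductive decomposition into homes-to-home segments
  have main : ∀ q : ℕ, q ≤ n → Home q → ∃ (m : ℕ) (δ : ℕ → ℤ×ℤ) (F : ℕ → ℝ),
      kz q = ∑ l ∈ Finset.range m, δ l ∧
      ∀ l < m, δ l = ((0:ℤ),(0:ℤ)) ∨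
        (0 ≤ F l ∧ |hzk (δ l)| ≤ s₁*((F l + 1)*ε + 4*R) ∧
          S*(F l)*ν - s₁*((F l + 1)*ε + 4*R) ≤ Uzk (δ l)) := by
    intro q
    induction q using Nat.strong_induction_on with
    | _ q IH =>
    intro hqn hHq
    by_cases hq0 : q = 0
    · subst hq0
      refine ⟨0, fun _ => ((0:ℤ),(0:ℤ)), fun _ => 0, ?_, by intro l hl; omega⟩
      have hk0 : kz 0 = ((0:ℤ),(0:ℤ)) := by
        have h01 : (xh 0 - P).1 = 0 := by rw [hPdef]; simp
        have h02 : (xh 0 - P).2 = 0 := by rw [hPdef]; simp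
        simp only [hkzdef]
        rw [h01, h02]
        simp
      rw [hk0]
      simp
    · have hq0' : 0 < q := Nat.pos_of_ne_zero hq0
      set p := Nat.findGreatest Home (q-1) with hpdef
      have hHp : Home p := Nat.findGreatest_spec (Nat.zero_le _) hH0
      have hple : p ≤ q - 1 := Nat.findGreatest_le _
      have hpq : p < q := by omega
      have hmid : ∀ j, p < j → j < q → ¬ Home j := by
        intro j hj1 hj2 hHj
        have h1' : Nat.findGreatest Home (q-1) < j := by rw [← hpdef]; exact hj1
        exact Nat.findGreatest_is_greatest h1' (by omega) hHj
      obtain ⟨m, δ, F, hsum, hprops⟩ := IH p hpq (by omega) hHp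
      obtain ⟨hseg1, hseg2⟩ := seg p q hpq hqn hHp hHq hmid
      have hccast : ((q-p:ℕ):ℝ) = ((q-p-1:ℕ):ℝ) + 1 := by
        have h : q - p = (q - p - 1) + 1 := by omega
        rw [h]
        push_cast
        ring
      refine ⟨m+1, fun l => if l < m then δ l else kz q - kz p,
        fun l => if l < m then F l else ((q-p-1:ℕ):ℝ), ?_, ?_⟩
      · rw [Finset.sum_range_succ]
        have hagree : ∑ l ∈ Finset.range m, (if l < m then δ l else kz q - kz p)
            = ∑ l ∈ Finset.range m, δ l :=
          Finset.sum_congr rfl (fun l hl => by simp [Finset.mem_range.mp hl])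
        rw [hagree, if_neg (lt_irrefl m), ← hsum]
        abel
      · intro l hl
        rcases Nat.lt_or_ge l m with hlm | hlm
        · simpa [hlm] using hprops l hlm
        · have hlm' : l = m := by omega
          subst hlm'
          simp only [lt_irrefl, if_false]
          right
          refine ⟨by positivity, ?_, ?_⟩
          · rw [← hccast]
            exact hseg1
          · rw [← hccast]
            exact hseg2
  -- conclusion
  obtain ⟨m, δ, F, hsum, hprops⟩ := main n le_rfl hHn
  have hkzn : kz n = d := by
    have hh : xh n - P = ((d.1:ℝ), (d.2:ℝ)) := hhom
    have h1 : (xh n - P).1 = (d.1:ℝ) := by rw [hh]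
    have h2 : (xh n - P).2 = (d.2:ℝ) := by rw [hh]
    simp only [hkzdef]
    rw [h1, h2]
    simp
  -- pointwise dichotomy: every nonzero event moves forward definitely
  have dich : ∀ (k : ℤ×ℤ) (Fl : ℝ), k ≠ ((0:ℤ),(0:ℤ)) → 0 ≤ Fl →
      |hzk k| ≤ s₁*((Fl+1)*ε + 4*R) → S*Fl*ν - s₁*((Fl+1)*ε + 4*R) ≤ Uzk k →
      4/5*s₂ ≤ Uzk k := by
    intro k Fl hk0 hF h1 h2
    have hnorm : S ≤ (Uzk k)^2 + (hzk k)^2 := by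
      have := norm_lemma a b S hSdef k hk0
      rw [hUzkdef, hhzkdef]
      exact this
    exact dich_lemma s₁ S s₂ R ν ε (Uzk k) (hzk k) Fl hs₁ hS hs₂ hs₂sq hν0 hε0 hR0
      hε1 hRs₂ hεs₂ hSνs₂ hF hnorm h1 h2
  -- sum of the U-values
  have hUadd : ∀ (mm : ℕ), Uzk (∑ l ∈ Finset.range mm, δ l)
      = ∑ l ∈ Finset.range mm, Uzk (δ l) := by
    intro mm
    induction mm with
    | zero => simp [hUzkdef]
    | succ k ih =>
      rw [Finset.sum_range_succ, Finset.sum_range_succ, ← ih]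
      simp only [hUzkdef, Prod.fst_add, Prod.snd_add]
      push_cast
      ring
  have hUnn : ∀ l < m, 0 ≤ Uzk (δ l) := by
    intro l hl
    rcases hprops l hl with h | ⟨hF, h1, h2⟩
    · simp [h, hUzkdef]
    · by_cases hz0 : δ l = ((0:ℤ),(0:ℤ))
      · simp [hz0, hUzkdef]
      · have := dich (δ l) (F l) hz0 hF h1 h2
        linarith
  have hUsum : ∑ l ∈ Finset.range m, Uzk (δ l) = D := by
    rw [← hUadd, ← hsum, hkzn]
    simp [hUzkdef, hDdef]
  -- there is a nonzero event
  have hex : ∃ l₀, l₀ < m ∧ δ l₀ ≠ ((0:ℤ),(0:ℤ)) := by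
    by_contra hcon
    push_neg at hcon
    have : kz n = ((0:ℤ),(0:ℤ)) := by
      rw [hsum]
      apply Finset.sum_eq_zero
      intro l hl
      exact hcon l (Finset.mem_range.mp hl)
    rw [hkzn] at this
    exact hd this
  obtain ⟨l₀, hl₀, hδ0⟩ := hex
  obtain ⟨hF, h1, h2⟩ := (hprops l₀ hl₀).resolve_left hδ0
  have hU45 : 4/5*s₂ ≤ Uzk (δ l₀) := dich (δ l₀) (F l₀) hδ0 hF h1 h2
  have hUleD : Uzk (δ l₀) ≤ D := by
    have hmem : l₀ ∈ Finset.range m := Finset.mem_range.mpr hl₀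
    have hsplit := Finset.sum_erase_add (Finset.range m) (fun l => Uzk (δ l)) hmem
    have hrest : 0 ≤ ∑ l ∈ (Finset.range m).erase l₀, Uzk (δ l) :=
      Finset.sum_nonneg (fun l hl => hUnn l (Finset.mem_range.mp (Finset.mem_of_mem_erase hl)))
    rw [hUsum] at hsplit
    linarith
  have hUleAbsD : Uzk (δ l₀) ≤ |D| := le_trans hUleD (le_abs_self D)
  -- bound on F l₀
  have hFb : (F l₀)*(S*ν) ≤ 2*(|D| + s₂) :=
    Fb_lemma s₁ S s₂ R ν ε (|D|) (Uzk (δ l₀)) (F l₀) hs₁ hν0 hS hs₂ hε0 hR0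
      (abs_nonneg D) hε1 hεs₂ hRs₂ hF h2 hUleAbsD
  -- the h-value of the event is too small
  have hhb : |hzk (δ l₀)| < η :=
    hh_lemma s₁ S s₂ R ν ε η (|D|) (hzk (δ l₀)) (F l₀) hs₁ hηpos hε0 (abs_nonneg D) hs₂
      hε3 hε4 hRη hF hFb h1
  -- the event lies in Λ
  have hmemΛ : δ l₀ ∈ Λ := by
    have hid : (Uzk (δ l₀))^2 + (hzk (δ l₀))^2
        = S*((((δ l₀).1:ℝ))^2 + (((δ l₀).2:ℝ))^2) := by
      rw [hUzkdef, hhzkdef, hSdef]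
      ring
    obtain ⟨hb1, hb2⟩ := coord_lemma S s₂ (|D|) ((N:ℝ)) (Uzk (δ l₀)) (hzk (δ l₀))
      (((δ l₀).1:ℝ)) (((δ l₀).2:ℝ)) hS hs₂ hs₂sq (abs_nonneg D)
      (by linarith) hUleAbsD (le_trans hhb.le hηs₂) hid hNB
    have hib1 : |(δ l₀).1| ≤ N := by
      have h := hb1
      rw [← Int.cast_abs] at h
      exact_mod_cast h
    have hib2 : |(δ l₀).2| ≤ N := by
      have h := hb2
      rw [← Int.cast_abs] at h
      exact_mod_cast h
    rw [hΛdef, Finset.mem_erase]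
    refine ⟨hδ0, ?_⟩
    rw [Finset.mem_product, Finset.mem_Icc, Finset.mem_Icc]
    exact ⟨abs_le.mp hib1, abs_le.mp hib2⟩
  have := hηle (δ l₀) hmemΛ
  simp only [hhzkdef] at hhb this
  linarith
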